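/- Let M be the minimal generating set of a monomial ideal with a total order ≻, let σ ⊆ M, and let m ∈ M be a gap of σ that is not a true gap of σ. Let m' be a non-true-gap witness of m in σ, i.e., m' ≺ m, m' is a bridge of σ∪{m}, and m' is not a bridge of σ. Then there exist a variable x and an integer n ≥ 1 such that the exponent of x in m and the exponent of x in m' both equal n, while the exponent of x in every element of σ∖{m'} is strictly less than n (i.e., m and m' share the factor x^n unique within σ). -/
import Mathlib


open scoped Classical

noncomputable section

namespace ChauHaMaithani

variable {V : Type*}

/-- The lcm of a finite set of monomials (exponent vectors): pointwise maximum. -/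
def mlcm (σ : Finset (V → ℕ)) : V → ℕ := fun v => σ.sup fun g => g v

/-- `m` is a bridge of `σ`: `m ∈ σ` and dropping `m` does not change the lcm. -/
def IsBridge (σ : Finset (V → ℕ)) (m : V → ℕ) : Prop :=
  m ∈ σ ∧ mlcm (σ.erase m) = mlcm σ

/-- `m` is a gap of `σ`: `m ∉ σ` and adding `m` does not change the lcm. -/
def IsGap (σ : Finset (V → ℕ)) (m : V → ℕ) : Prop :=
  m ∉ σ ∧ mlcm (insert m σ) = mlcm σ

/-- A total order `≻` on monomials is encoded by a ranking function `ord`: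
`m ≻ m'` iff `ord m' < ord m` (injectivity on the generating set is assumed separately).
`m` is a true gap of `σ` if it is a gap and every bridge of `σ ∪ {m}` dominated by `m`
is already a bridge of `σ`. -/
def IsTrueGap (ord : (V → ℕ) → ℕ) (σ : Finset (V → ℕ)) (m : V → ℕ) : Prop :=
  IsGap σ m ∧ ∀ m', IsBridge (insert m σ) m' → ord m' < ord m → IsBridge σ m'

/-- `σ` is type-1: it has a true gap (in `M`) dominating none of its bridges. -/
def Type1 (M : Finset (V → ℕ)) (ord : (V → ℕ) → ℕ) (σ : Finset (V → ℕ)) : Prop :=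
  ∃ m ∈ M, IsTrueGap ord σ m ∧ ∀ b, IsBridge σ b → ¬ ord b < ord m

/-- `σ` is potentially-type-2: it has a bridge dominating none of its true gaps. -/
def PotType2 (M : Finset (V → ℕ)) (ord : (V → ℕ) → ℕ) (σ : Finset (V → ℕ)) : Prop :=
  ∃ b, IsBridge σ b ∧ ∀ m ∈ M, IsTrueGap ord σ m → ¬ ord m < ord b

/-- `b` is the `≻`-smallest bridge of `σ`. -/
def IsSBridge (ord : (V → ℕ) → ℕ) (σ : Finset (V → ℕ)) (b : V → ℕ) : Prop :=
  IsBridge σ b ∧ ∀ b', IsBridge σ b' → ord b ≤ ord b'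

/-- `σ` is type-2. -/
def Type2 (M : Finset (V → ℕ)) (ord : (V → ℕ) → ℕ) (σ : Finset (V → ℕ)) : Prop :=
  PotType2 M ord σ ∧
    ∀ σ' : Finset (V → ℕ), σ' ⊆ M → σ' ≠ σ → PotType2 M ord σ' →
      ∀ b b', IsSBridge ord σ b → IsSBridge ord σ' b' →
        σ'.erase b' = σ.erase b → ord b < ord b'

/-- `M` (the minimal generating set of a monomial ideal) is bridge-friendly w.r.t. `ord`:
every potentially-type-2 subset is type-2. -/
def BridgeFriendlyWrt (M : Finset (V → ℕ)) (ord : (V → ℕ) → ℕ) : Prop :=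
  ∀ σ ⊆ M, PotType2 M ord σ → Type2 M ord σ

/-- `M` is bridge-friendly: bridge-friendly w.r.t. some total order on `M`. -/
def BridgeFriendly (M : Finset (V → ℕ)) : Prop :=
  ∃ ord : (V → ℕ) → ℕ, Set.InjOn ord M ∧ BridgeFriendlyWrt M ord

/-- `σ = {m_1 ≻ ⋯ ≻ m_k} ⊆ M` is Lyubeznik-critical w.r.t. `ord`: there is no `m ∈ M` with
`m_t ≻ m` and `m ∣ lcm(m_1, …, m_t)` for some `1 < t ≤ k`. -/
def LyubCritical (M : Finset (V → ℕ)) (ord : (V → ℕ) → ℕ) (σ : Finset (V → ℕ)) : Prop :=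
  σ ⊆ M ∧ ¬ ∃ m ∈ M, ∃ t ∈ σ, (∃ u ∈ σ, ord t < ord u) ∧ ord m < ord t ∧
      ∀ v, m v ≤ mlcm (σ.filter fun g => ord t ≤ ord g) v

/-- `M` is Lyubeznik: for some total order on `M`, no Lyubeznik-critical subset has a
bridge (equivalently, the associated Lyubeznik resolution is minimal). -/
def IsLyubeznik (M : Finset (V → ℕ)) : Prop :=
  ∃ ord : (V → ℕ) → ℕ, Set.InjOn ord M ∧
    ∀ σ : Finset (V → ℕ), LyubCritical M ord σ → ∀ b, ¬ IsBridge σ b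

/-- The quadratic monomial `xy` attached to an edge `e = {x,y}`. -/
def edgeMon (e : Sym2 V) : V → ℕ := fun v => if v ∈ e then 1 else 0

/-- `mingens(I(G))`: the edge monomials of `G`. -/
def edgeGens [Fintype V] (G : SimpleGraph V) : Finset (V → ℕ) :=
  (Finset.univ.filter fun e : Sym2 V => e ∈ G.edgeSet).image edgeMon

/-- `mingens(I(G)^n)`: the monomials that are products of `n` edges of `G`. -/
def edgePowGens [Fintype V] (G : SimpleGraph V) (n : ℕ) : Finset (V → ℕ) :=
  (Finset.univ.filter fun f : Fin n → Sym2 V => ∀ i, f i ∈ G.edgeSet).image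
    fun f => ∑ i, edgeMon (f i)

/-- A graph is chordal if it contains no induced cycle of length at least 4. -/
def Chordal (G : SimpleGraph V) : Prop :=
  ∀ n, 4 ≤ n → IsEmpty (SimpleGraph.cycleGraph n ↪g G)


/-- **Proposition 2.10.** If `m` is a gap but not a true gap of `σ`, then `m` and any of
its non-true-gap witnesses `m'` share a factor `x^n` unique within `σ`. -/
theorem witness_shares_unique_factor {V : Type*} (M : Finset (V → ℕ))
    (ord : (V → ℕ) → ℕ) (σ : Finset (V → ℕ)) (hσ : σ ⊆ M) (m m' : V → ℕ) (hm : m ∈ M)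
    (hm' : m' ∈ M) (hgap : IsGap σ m) (hnottrue : ¬ IsTrueGap ord σ m)
    (hlt : ord m' < ord m) (hbr : IsBridge (insert m σ) m') (hnbr : ¬ IsBridge σ m') :
    ∃ (x : V) (n : ℕ), 1 ≤ n ∧ m x = n ∧ m' x = n ∧ ∀ g ∈ σ.erase m', g x < n := by
  have hmm' : m ≠ m' := by rintro rfl; exact lt_irrefl _ hlt
  have hm'σ : m' ∈ σ := by
    rcases Finset.mem_insert.1 hbr.1 with h | h
    · exact absurd h.symm hmm'
    · exact h
  -- find x where erasing m' drops the sup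
  have hne : mlcm (σ.erase m') ≠ mlcm σ := fun h => hnbr ⟨hm'σ, h⟩
  have hx : ∃ x, mlcm (σ.erase m') x < mlcm σ x := by
    by_contra h
    push_neg at h
    apply hne
    funext x
    refine le_antisymm ?_ (h x)
    exact Finset.sup_mono (Finset.erase_subset _ _)
  obtain ⟨x, hxlt⟩ := hx
  set n := mlcm σ x with hn
  refine ⟨x, n, ?_, ?_, ?_, ?_⟩
  · omega
  · -- m x = n
    have heq : (insert m σ).erase m' = insert m (σ.erase m') :=
      Finset.erase_insert_of_ne hmm'
    have h1 : mlcm ((insert m σ).erase m') = mlcm (insert m σ) := hbr.2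
    have h2 : mlcm (insert m σ) = mlcm σ := hgap.2
    have h3 : mlcm (insert m (σ.erase m')) x = n := by
      rw [← heq, h1, h2]
    have h4 : mlcm (insert m (σ.erase m')) x = max (m x) (mlcm (σ.erase m') x) := by
      simp [mlcm, Finset.sup_insert]
    rw [h4] at h3
    have : m x ≤ n := le_of_max_le_left (le_of_eq h3)
    rcases lt_or_eq_of_le this with h | h
    · exfalso; omega
    · exact h
  · -- m' x = n
    have h4 : mlcm σ x = max (m' x) (mlcm (σ.erase m') x) := by
      conv_lhs => rw [← Finset.insert_erase hm'σ]
      simp [mlcm, Finset.sup_insert]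
    have : max (m' x) (mlcm (σ.erase m') x) = n := h4.symm
    have hle : m' x ≤ n := by
      have := Finset.le_sup (f := fun g => g x) hm'σ
      exact this
    omega
  · intro g hg
    have := Finset.le_sup (f := fun g => g x) hg
    exact lt_of_le_of_lt this hxlt

end ChauHaMaithani
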